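/- Let F be a field, r, s ≥ 0, n = r + s, and A = I_r ⊕ 0_s ∈ F^{n×n}. Let u = (u_1^T, u_2^T)^T and v = (v_1^T, v_2^T)^T ∈ F^n be column vectors blocked conformally with u_1, v_1 ∈ F^r and u_2, v_2 ∈ F^s. Then: rank(A + u v^T) = r − 1 if and only if u_1^T v_1 = −1 and u_2 = 0 and v_2 = 0; and rank(A + u v^T) = r + 1 if and only if u_2 ≠ 0 and v_2 ≠ 0. -/

import Mathlib

open Matrix Submodule Module

section Stmt12Aux

variable {F : Type} [Field F] {r s : ℕ}

private lemma vmv_mulVec {m n : Type} [Fintype n] (u : m → F) (v x : n → F) :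
    Matrix.vecMulVec u v *ᵥ x = (v ⬝ᵥ x) • u := by
  ext a
  simp only [Matrix.mulVec, Matrix.vecMulVec_apply, dotProduct, Pi.smul_apply, smul_eq_mul,
    Finset.sum_mul]
  exact Finset.sum_congr rfl fun b _ => by ring

private lemma li_single :
    LinearIndependent F
      (fun i : Fin r => (Pi.single (Sum.inl i) 1 : Fin r ⊕ Fin s → F)) := by
  have h := (Pi.basisFun F (Fin r ⊕ Fin s)).linearIndependent.comp Sum.inl Sum.inl_injective
  convert h using 1
  funext i
  simp [Function.comp, Pi.basisFun_apply]

private lemma mem_range_aux (u v : Fin r ⊕ Fin s → F) {k : Fin s} (hv : v (Sum.inr k) ≠ 0) :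
    u ∈ LinearMap.range
        (Matrix.fromBlocks (1 : Matrix (Fin r) (Fin r) F) 0 0 0 +
          Matrix.vecMulVec u v).mulVecLin ∧
    ∀ i : Fin r, (Pi.single (Sum.inl i) 1 : Fin r ⊕ Fin s → F) ∈
      LinearMap.range
        (Matrix.fromBlocks (1 : Matrix (Fin r) (Fin r) F) 0 0 0 +
          Matrix.vecMulVec u v).mulVecLin := by
  set M := Matrix.fromBlocks (1 : Matrix (Fin r) (Fin r) F) 0 0 0 + Matrix.vecMulVec u v with hM
  have key : ∀ x, M.mulVecLin x =
      (Matrix.fromBlocks (1 : Matrix (Fin r) (Fin r) F) 0 0 0) *ᵥ x + (v ⬝ᵥ x) • u := by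
    intro x; rw [Matrix.mulVecLin_apply, hM, Matrix.add_mulVec, vmv_mulVec]
  have hdot : ∀ b : Fin r ⊕ Fin s, v ⬝ᵥ (Pi.single b 1 : Fin r ⊕ Fin s → F) = v b := by
    intro b; simp [dotProduct, Pi.single_apply]
  have hcol1 : ∀ i : Fin r,
      (Matrix.fromBlocks 1 0 0 0 : Matrix (Fin r ⊕ Fin s) (Fin r ⊕ Fin s) F) *ᵥ
          (Pi.single (Sum.inl i) 1 : Fin r ⊕ Fin s → F) =
        (Pi.single (Sum.inl i) 1 : Fin r ⊕ Fin s → F) := by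
    intro i; ext (a | a) <;>
      simp [Matrix.mulVec_single, Matrix.one_apply, Pi.single_apply]
  have hcol2 :
      (Matrix.fromBlocks 1 0 0 0 : Matrix (Fin r ⊕ Fin s) (Fin r ⊕ Fin s) F) *ᵥ
        (Pi.single (Sum.inr k) 1 : Fin r ⊕ Fin s → F) = (0 : Fin r ⊕ Fin s → F) := by
    ext (a | a) <;> simp [Matrix.mulVec_single]
  have hu : u ∈ LinearMap.range M.mulVecLin := by
    refine ⟨(v (Sum.inr k))⁻¹ • (Pi.single (Sum.inr k) 1 : Fin r ⊕ Fin s → F), ?_⟩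
    rw [LinearMap.map_smul, key, hcol2, hdot, zero_add, smul_smul, inv_mul_cancel₀ hv, one_smul]
  refine ⟨hu, fun i => ?_⟩
  have heq : (Pi.single (Sum.inl i) 1 : Fin r ⊕ Fin s → F) =
      M.mulVecLin (Pi.single (Sum.inl i) 1) - v (Sum.inl i) • u := by
    rw [key, hcol1, hdot, add_sub_cancel_right]
  rw [heq]
  exact sub_mem (LinearMap.mem_range_self _ _) (Submodule.smul_mem _ _ hu)

private lemma rank_lower_one (u v : Fin r ⊕ Fin s → F) {k : Fin s} (hv : v (Sum.inr k) ≠ 0) :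
    r ≤ (Matrix.fromBlocks (1 : Matrix (Fin r) (Fin r) F) 0 0 0 +
      Matrix.vecMulVec u v).rank := by
  obtain ⟨hu, he⟩ := mem_range_aux u v hv
  set M := Matrix.fromBlocks (1 : Matrix (Fin r) (Fin r) F) 0 0 0 + Matrix.vecMulVec u v with hM
  set W1 := Submodule.span F
    (Set.range fun i : Fin r => (Pi.single (Sum.inl i) 1 : Fin r ⊕ Fin s → F)) with hW1
  have hle : W1 ≤ LinearMap.range M.mulVecLin := by
    rw [hW1, Submodule.span_le]; rintro _ ⟨i, rfl⟩; exact he i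
  have h1 : finrank F W1 = r := by
    rw [hW1, finrank_span_eq_card (li_single (F := F) (r := r) (s := s)), Fintype.card_fin]
  calc r = finrank F W1 := h1.symm
    _ ≤ finrank F (LinearMap.range M.mulVecLin) := Submodule.finrank_mono hle
    _ = M.rank := rfl

private lemma rank_lower_two (u v : Fin r ⊕ Fin s → F) {j k : Fin s}
    (hu : u (Sum.inr j) ≠ 0) (hv : v (Sum.inr k) ≠ 0) :
    r + 1 ≤ (Matrix.fromBlocks (1 : Matrix (Fin r) (Fin r) F) 0 0 0 +
      Matrix.vecMulVec u v).rank := by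
  obtain ⟨humem, he⟩ := mem_range_aux u v hv
  set M := Matrix.fromBlocks (1 : Matrix (Fin r) (Fin r) F) 0 0 0 + Matrix.vecMulVec u v with hM
  set W1 := Submodule.span F
    (Set.range fun i : Fin r => (Pi.single (Sum.inl i) 1 : Fin r ⊕ Fin s → F)) with hW1
  set W2 := Submodule.span F {u} with hW2
  have hle : W1 ⊔ W2 ≤ LinearMap.range M.mulVecLin := by
    refine sup_le ?_ ?_
    · rw [hW1, Submodule.span_le]; rintro _ ⟨i, rfl⟩; exact he i
    · rw [hW2, Submodule.span_le, Set.singleton_subset_iff]; exact humem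
  have hinf : W1 ⊓ W2 = ⊥ := by
    rw [eq_bot_iff]
    intro x hx
    obtain ⟨hx1, hx2⟩ := Submodule.mem_inf.mp hx
    obtain ⟨c, rfl⟩ := Submodule.mem_span_singleton.mp hx2
    have hker : W1 ≤ LinearMap.ker
        (LinearMap.proj (Sum.inr j) : (Fin r ⊕ Fin s → F) →ₗ[F] F) := by
      rw [hW1, Submodule.span_le]
      rintro _ ⟨i, rfl⟩
      simp [LinearMap.mem_ker, Pi.single_apply]
    have hcoord : (c • u) (Sum.inr j) = 0 := by simpa using hker hx1
    have hc0 : c = 0 := by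
      have hmul : c * u (Sum.inr j) = 0 := by simpa using hcoord
      rcases mul_eq_zero.mp hmul with h | h
      · exact h
      · exact absurd h hu
    simp [hc0, Submodule.mem_bot]
  have h1 : finrank F W1 = r := by
    rw [hW1, finrank_span_eq_card (li_single (F := F) (r := r) (s := s)), Fintype.card_fin]
  have h2 : finrank F W2 = 1 :=
    finrank_span_singleton (fun h0 => hu (by simp [h0]))
  have hsup := Submodule.finrank_sup_add_finrank_inf_eq W1 W2
  rw [hinf, finrank_bot, add_zero, h1, h2] at hsup
  calc r + 1 = finrank F ↥(W1 ⊔ W2) := hsup.symm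
    _ ≤ finrank F (LinearMap.range M.mulVecLin) := Submodule.finrank_mono hle
    _ = M.rank := rfl

private lemma rank_fromBlocks_zero (B : Matrix (Fin r) (Fin r) F) :
    (Matrix.fromBlocks B 0 0 0 : Matrix (Fin r ⊕ Fin s) (Fin r ⊕ Fin s) F).rank = B.rank := by
  refine le_antisymm ?_ ?_
  · have h1 : (Matrix.fromBlocks B 0 0 0 : Matrix (Fin r ⊕ Fin s) (Fin r ⊕ Fin s) F) =
        Matrix.fromRows (1 : Matrix (Fin r) (Fin r) F) (0 : Matrix (Fin s) (Fin r) F) * B *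
          Matrix.fromCols (1 : Matrix (Fin r) (Fin r) F) (0 : Matrix (Fin r) (Fin s) F) := by
      rw [Matrix.fromRows_mul, Matrix.fromRows_mul_fromCols]
      simp
    rw [h1]
    exact (Matrix.rank_mul_le_left _ _).trans (Matrix.rank_mul_le_right _ _)
  · have h2 : B = Matrix.fromCols (1 : Matrix (Fin r) (Fin r) F) (0 : Matrix (Fin r) (Fin s) F) *
        ((Matrix.fromBlocks B 0 0 0 : Matrix (Fin r ⊕ Fin s) (Fin r ⊕ Fin s) F) *
          Matrix.fromRows (1 : Matrix (Fin r) (Fin r) F) (0 : Matrix (Fin s) (Fin r) F)) := by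
      rw [Matrix.fromBlocks_mul_fromRows, Matrix.fromCols_mul_fromRows]
      simp
    conv_lhs => rw [h2]
    exact (Matrix.rank_mul_le_right _ _).trans (Matrix.rank_mul_le_left _ _)

private lemma rank_add_vmv_le (u v : Fin r ⊕ Fin s → F) :
    (Matrix.fromBlocks (1 : Matrix (Fin r) (Fin r) F) 0 0 0 +
      Matrix.vecMulVec u v).rank ≤ r + 1 := by
  set A : Matrix (Fin r ⊕ Fin s) (Fin r ⊕ Fin s) F := Matrix.fromBlocks 1 0 0 0 with hA
  have hsub : LinearMap.range (A + Matrix.vecMulVec u v).mulVecLin ≤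
      LinearMap.range A.mulVecLin ⊔ LinearMap.range (Matrix.vecMulVec u v).mulVecLin := by
    rw [Matrix.mulVecLin_add]
    rintro _ ⟨x, rfl⟩
    exact Submodule.mem_sup.mpr
      ⟨_, LinearMap.mem_range_self _ x, _, LinearMap.mem_range_self _ x, rfl⟩
  have h1 : A.rank = r := by
    rw [hA, rank_fromBlocks_zero, Matrix.rank_one, Fintype.card_fin]
  have h2 : (Matrix.vecMulVec u v).rank ≤ 1 := by
    rw [Matrix.vecMulVec_eq (ι := Unit)]
    exact (Matrix.rank_mul_le_left _ _).trans
      ((Matrix.rank_le_card_width _).trans_eq (by simp))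
  calc (A + Matrix.vecMulVec u v).rank
      ≤ finrank F
        ↥(LinearMap.range A.mulVecLin ⊔ LinearMap.range (Matrix.vecMulVec u v).mulVecLin) :=
        Submodule.finrank_mono hsub
    _ ≤ A.rank + (Matrix.vecMulVec u v).rank :=
        Submodule.finrank_add_le_finrank_add_finrank _ _
    _ ≤ r + 1 := by omega

private lemma rank_le_of_v2_zero (u v : Fin r ⊕ Fin s → F)
    (hv : ∀ k : Fin s, v (Sum.inr k) = 0) :
    (Matrix.fromBlocks (1 : Matrix (Fin r) (Fin r) F) 0 0 0 +
      Matrix.vecMulVec u v).rank ≤ r := by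
  set M := Matrix.fromBlocks (1 : Matrix (Fin r) (Fin r) F) 0 0 0 + Matrix.vecMulVec u v with hM
  have h0 : M.toCols₂ = 0 := by
    ext a k
    rcases a with a | a <;>
      simp [hM, Matrix.toCols₂, Matrix.add_apply, Matrix.vecMulVec_apply, hv]
  have h : M = M.toCols₁ *
      Matrix.fromCols (1 : Matrix (Fin r) (Fin r) F) (0 : Matrix (Fin r) (Fin s) F) := by
    rw [Matrix.mul_fromCols, Matrix.mul_one, Matrix.mul_zero, ← h0,
      Matrix.fromCols_toCols]
  calc M.rank = (M.toCols₁ * Matrix.fromCols (1 : Matrix (Fin r) (Fin r) F)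
        (0 : Matrix (Fin r) (Fin s) F)).rank := by rw [← h]
    _ ≤ M.toCols₁.rank := Matrix.rank_mul_le_left _ _
    _ ≤ r := (Matrix.rank_le_card_width _).trans_eq (Fintype.card_fin r)

private lemma transpose_eq (u v : Fin r ⊕ Fin s → F) :
    (Matrix.fromBlocks (1 : Matrix (Fin r) (Fin r) F) 0 0 0 + Matrix.vecMulVec u v)ᵀ =
      Matrix.fromBlocks (1 : Matrix (Fin r) (Fin r) F) 0 0 0 + Matrix.vecMulVec v u := by
  rw [Matrix.transpose_add, Matrix.fromBlocks_transpose, Matrix.transpose_one,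
    Matrix.transpose_zero]
  congr 1
  ext a b
  simp [Matrix.transpose_apply, Matrix.vecMulVec_apply, mul_comm]

private lemma eq_blocks (u v : Fin r ⊕ Fin s → F)
    (hu : ∀ k : Fin s, u (Sum.inr k) = 0) (hv : ∀ k : Fin s, v (Sum.inr k) = 0) :
    Matrix.fromBlocks (1 : Matrix (Fin r) (Fin r) F) 0 0 0 + Matrix.vecMulVec u v =
      Matrix.fromBlocks
        (1 + Matrix.vecMulVec (u ∘ Sum.inl) (v ∘ Sum.inl) : Matrix (Fin r) (Fin r) F) 0 0 0 := by
  ext (a | a) (b | b) <;>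
    simp [Matrix.add_apply, Matrix.vecMulVec_apply, hu, hv]

private lemma rank_one_add_vmv_of_ne (u₁ v₁ : Fin r → F) (h : v₁ ⬝ᵥ u₁ ≠ -1) :
    (1 + Matrix.vecMulVec u₁ v₁ : Matrix (Fin r) (Fin r) F).rank = r := by
  have hdet : (1 + Matrix.vecMulVec u₁ v₁ : Matrix (Fin r) (Fin r) F).det = 1 + v₁ ⬝ᵥ u₁ := by
    rw [Matrix.vecMulVec_eq (ι := Unit), Matrix.det_one_add_replicateCol_mul_replicateRow]
  have hunit : IsUnit (1 + Matrix.vecMulVec u₁ v₁ : Matrix (Fin r) (Fin r) F) := by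
    rw [Matrix.isUnit_iff_isUnit_det, hdet, isUnit_iff_ne_zero]
    intro h0
    exact h (eq_neg_of_add_eq_zero_right h0)
  rw [Matrix.rank_of_isUnit _ hunit, Fintype.card_fin]

private lemma rank_one_add_vmv_of_eq (u₁ v₁ : Fin r → F) (h : v₁ ⬝ᵥ u₁ = -1) :
    (1 + Matrix.vecMulVec u₁ v₁ : Matrix (Fin r) (Fin r) F).rank + 1 = r := by
  set N : Matrix (Fin r) (Fin r) F := 1 + Matrix.vecMulVec u₁ v₁ with hN
  have hu1 : u₁ ≠ 0 := by
    rintro rfl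
    rw [dotProduct_zero] at h
    exact absurd h.symm (by norm_num)
  have hker : LinearMap.ker N.mulVecLin = Submodule.span F {u₁} := by
    apply le_antisymm
    · intro x hx
      rw [LinearMap.mem_ker, Matrix.mulVecLin_apply, hN, Matrix.add_mulVec,
        Matrix.one_mulVec, vmv_mulVec] at hx
      rw [Submodule.mem_span_singleton]
      exact ⟨-(v₁ ⬝ᵥ x), by rw [neg_smul]; exact (eq_neg_of_add_eq_zero_left hx).symm⟩
    · rw [Submodule.span_le, Set.singleton_subset_iff, SetLike.mem_coe, LinearMap.mem_ker,
        Matrix.mulVecLin_apply, hN, Matrix.add_mulVec, Matrix.one_mulVec, vmv_mulVec, h]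
      simp
  have hrn := LinearMap.finrank_range_add_finrank_ker N.mulVecLin
  rw [hker, finrank_span_singleton hu1, Module.finrank_fintype_fun_eq_card,
    Fintype.card_fin] at hrn
  exact hrn

end Stmt12Aux

/-- Rank-one update of `A = I_r ⊕ 0_s`: the rank drops to `r - 1` iff
`u₁ᵀv₁ = -1` and `u₂ = 0` and `v₂ = 0`; the rank rises to `r + 1` iff
`u₂ ≠ 0` and `v₂ ≠ 0`. -/
theorem stmt12 (F : Type) [Field F] (r s : ℕ)
    (A : Matrix (Fin r ⊕ Fin s) (Fin r ⊕ Fin s) F)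
    (hA : A = Matrix.fromBlocks (1 : Matrix (Fin r) (Fin r) F) 0 0 0)
    (u v : Fin r ⊕ Fin s → F) :
    ((((A + Matrix.vecMulVec u v).rank : ℤ) = (r : ℤ) - 1) ↔
      ((∑ i : Fin r, u (Sum.inl i) * v (Sum.inl i)) = -1 ∧
        (∀ i : Fin s, u (Sum.inr i) = 0) ∧ (∀ i : Fin s, v (Sum.inr i) = 0))) ∧
    (((A + Matrix.vecMulVec u v).rank = r + 1) ↔
      ((∃ i : Fin s, u (Sum.inr i) ≠ 0) ∧ (∃ i : Fin s, v (Sum.inr i) ≠ 0))) := by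
  subst hA
  have hdotc : (v ∘ Sum.inl) ⬝ᵥ (u ∘ Sum.inl) = ∑ i : Fin r, u (Sum.inl i) * v (Sum.inl i) := by
    simp only [dotProduct, Function.comp_apply]
    exact Finset.sum_congr rfl fun i _ => mul_comm _ _
  constructor
  · constructor
    · intro h
      have hu2 : ∀ k : Fin s, u (Sum.inr k) = 0 := by
        by_contra hc
        push_neg at hc
        obtain ⟨k, hk⟩ := hc
        have hl := rank_lower_one v u hk
        rw [← transpose_eq u v, Matrix.rank_transpose] at hl
        omega
      have hv2 : ∀ k : Fin s, v (Sum.inr k) = 0 := by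
        by_contra hc
        push_neg at hc
        obtain ⟨k, hk⟩ := hc
        have hl := rank_lower_one u v hk
        omega
      refine ⟨?_, hu2, hv2⟩
      have hr : (Matrix.fromBlocks (1 : Matrix (Fin r) (Fin r) F) 0 0 0 +
          Matrix.vecMulVec u v).rank =
          (1 + Matrix.vecMulVec (u ∘ Sum.inl) (v ∘ Sum.inl) : Matrix (Fin r) (Fin r) F).rank := by
        rw [eq_blocks u v hu2 hv2, rank_fromBlocks_zero]
      by_contra hc
      have := rank_one_add_vmv_of_ne (u ∘ Sum.inl) (v ∘ Sum.inl) (by rw [hdotc]; exact hc)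
      omega
    · rintro ⟨hc, hu2, hv2⟩
      have hr : (Matrix.fromBlocks (1 : Matrix (Fin r) (Fin r) F) 0 0 0 +
          Matrix.vecMulVec u v).rank =
          (1 + Matrix.vecMulVec (u ∘ Sum.inl) (v ∘ Sum.inl) : Matrix (Fin r) (Fin r) F).rank := by
        rw [eq_blocks u v hu2 hv2, rank_fromBlocks_zero]
      have := rank_one_add_vmv_of_eq (u ∘ Sum.inl) (v ∘ Sum.inl) (by rw [hdotc]; exact hc)
      omega
  · constructor
    · intro h
      constructor
      · by_contra hc
        push_neg at hc
        have hl := rank_le_of_v2_zero v u hc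
        rw [← transpose_eq u v, Matrix.rank_transpose] at hl
        omega
      · by_contra hc
        push_neg at hc
        have hl := rank_le_of_v2_zero u v hc
        omega
    · rintro ⟨⟨j, hj⟩, ⟨k, hk⟩⟩
      exact le_antisymm (rank_add_vmv_le u v) (rank_lower_two u v hj hk)
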